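/- Let G be an ancestral graph with node set V, let X and Y be disjoint non-empty node sets, and let I, R ⊆ V be sets with I ⊆ R and R ∩ (X ∪ Y) = ∅. If there exists an m-separator Z₀ relative to (X,Y) with I ⊆ Z₀ ⊆ R, then the set Z = Ant(X ∪ Y ∪ I) ∩ R is an m-separator relative to (X,Y). -/
import Mathlib


/-!
Common definitions: mixed graphs, walks, colliders, m-separation,
ancestral graphs, DAGs, MAGs, proper causal paths, adjustment criteria,
inducing paths, and MAG marginalization.
-/

universe u

/-- The four possible kinds of edges of a mixed graph, oriented along the
direction of traversal: `u → v`, `u ← v`, `u ↔ v`, `u − v`. -/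
inductive EType where
  | right : EType
  | left : EType
  | both : EType
  | undirEdge : EType
deriving DecidableEq

namespace EType

/-- The edge has an arrowhead at its first endpoint. -/
def headFst : EType → Prop
  | .left => True
  | .both => True
  | _ => False

/-- The edge has an arrowhead at its second endpoint. -/
def headSnd : EType → Prop
  | .right => True
  | .both => True
  | _ => False

end EType

/-- A mixed graph with directed, bidirected and undirected edges. -/
structure MixedGraph (V : Type u) where
  dir : V → V → Prop
  bi : V → V → Prop
  undir : V → V → Prop
  bi_symm : ∀ u v, bi u v → bi v u
  undir_symm : ∀ u v, undir u v → undir v u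

namespace MixedGraph

variable {V : Type u}

/-- `G.IsEdge e u v` holds if the graph contains the edge `e` from `u` to `v`
(read in the direction of traversal). -/
def IsEdge (G : MixedGraph V) : EType → V → V → Prop
  | .right, u, v => G.dir u v
  | .left, u, v => G.dir v u
  | .both, u, v => G.bi u v
  | .undirEdge, u, v => G.undir u v

/-- Walks in a mixed graph, remembering the type of every traversed edge. -/
inductive Walk (G : MixedGraph V) : V → V → Type u
  | nil (v : V) : Walk G v v
  | cons (u v w : V) (e : EType) (h : G.IsEdge e u v) (p : Walk G v w) : Walk G u w

namespace Walk

variable {G : MixedGraph V}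

/-- The list of nodes visited by a walk (with multiplicity). -/
def support : {a b : V} → G.Walk a b → List V
  | _, _, .nil v => [v]
  | _, _, .cons u _ _ _ _ p => u :: p.support

/-- A path is a walk without repeated nodes. -/
def IsPath {a b : V} (p : G.Walk a b) : Prop := p.support.Nodup

/-- Auxiliary m-connectivity check: `ph` records whether the previous edge of
the walk has an arrowhead at the current start node.  At every interior node,
the node must be a collider (two arrowheads meet) iff it belongs to `Z`. -/
def connFrom (Z : Set V) : Prop → {a b : V} → G.Walk a b → Prop
  | _, _, _, .nil _ => True
  | ph, _, _, .cons u _ _ e _ p =>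
      ((ph ∧ e.headFst) ↔ u ∈ Z) ∧ p.connFrom Z e.headSnd

/-- The walk m-connects its endpoints given `Z`: all colliders and only
colliders on it are in `Z`. -/
def ConnBy (Z : Set V) : {a b : V} → G.Walk a b → Prop
  | _, _, .nil _ => True
  | _, _, .cons _ _ _ e _ p => p.connFrom Z e.headSnd

/-- A causal (directed) walk: every edge points towards the end node. -/
def IsCausal : {a b : V} → G.Walk a b → Prop
  | _, _, .nil _ => True
  | _, _, .cons _ _ _ e _ p => e = EType.right ∧ p.IsCausal

/-- A walk is proper w.r.t. `X` if only its start node may belong to `X`. -/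
def ProperFrom (X : Set V) : {a b : V} → G.Walk a b → Prop
  | _, _, .nil _ => True
  | _, _, .cons _ _ _ _ _ p => ∀ n ∈ p.support, n ∉ X

/-- Concatenation of walks. -/
def append : {a b c : V} → G.Walk a b → G.Walk b c → G.Walk a c
  | _, _, _, .nil _, q => q
  | _, _, _, .cons u v _ e h p, q => .cons u v _ e h (p.append q)

/-- The walk is nonempty and its first edge has an arrowhead at the start
node. -/
def headAtStart : {a b : V} → G.Walk a b → Prop
  | _, _, .nil _ => False
  | _, _, .cons _ _ _ e _ _ => e.headFst

/-- The walk is nonempty and its last edge has an arrowhead at the end node. -/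
def headAtEnd : {a b : V} → G.Walk a b → Prop
  | _, _, .nil _ => False
  | _, _, .cons _ _ _ e _ (.nil _) => e.headSnd
  | _, _, .cons _ _ _ _ _ p => p.headAtEnd

/-- `P` holds of every (ordered) pair of consecutive nodes of the walk. -/
def edgeProp (P : V → V → Prop) : {a b : V} → G.Walk a b → Prop
  | _, _, .nil _ => True
  | _, _, .cons u v _ _ _ p => P u v ∧ p.edgeProp P

end Walk

/-- `x` and `y` are m-connected given `Z`: there is a walk between them on
which all colliders and only colliders are in `Z`. -/
def MConn (G : MixedGraph V) (Z : Set V) (x y : V) : Prop :=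
  ∃ p : G.Walk x y, p.ConnBy Z

/-- `Z` m-separates the node sets `X` and `Y`. -/
def MSep (G : MixedGraph V) (X Y Z : Set V) : Prop :=
  ∀ x ∈ X, ∀ y ∈ Y, ¬ G.MConn Z x y

/-- `Z` is an m-separator relative to `(X, Y)`: it is disjoint from `X ∪ Y`
and m-separates `X` and `Y`. -/
def IsMSep (G : MixedGraph V) (X Y Z : Set V) : Prop :=
  Disjoint Z (X ∪ Y) ∧ G.MSep X Y Z

/-- An `M`-minimal m-separator relative to `(X, Y)`. -/
def IsMinMSep (G : MixedGraph V) (X Y M Z : Set V) : Prop :=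
  G.IsMSep X Y Z ∧ M ⊆ Z ∧ ∀ Z', Z' ⊂ Z → M ⊆ Z' → ¬ G.IsMSep X Y Z'

/-- One step of the anterior relation: a directed or undirected edge. -/
def antEdge (G : MixedGraph V) (u v : V) : Prop := G.dir u v ∨ G.undir u v

/-- `u` is an anterior of `v` (every node is its own anterior). -/
def Anterior (G : MixedGraph V) (u v : V) : Prop :=
  Relation.ReflTransGen G.antEdge u v

/-- The set of anteriors of nodes of `W`. -/
def Ant (G : MixedGraph V) (W : Set V) : Set V := {u | ∃ w ∈ W, G.Anterior u w}

/-- `v` is a descendant of `u`, i.e. there is a directed path `u → ⋯ → v`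
(every node is its own descendant/ancestor). -/
def Anc (G : MixedGraph V) (u v : V) : Prop := Relation.ReflTransGen G.dir u v

/-- The set of descendants of nodes of `W`. -/
def De (G : MixedGraph V) (W : Set V) : Set V := {v | ∃ w ∈ W, G.Anc w v}

/-- The set of ancestors of nodes of `W`. -/
def AnSet (G : MixedGraph V) (W : Set V) : Set V := {v | ∃ w ∈ W, G.Anc v w}

/-- An ancestral graph: (1) for each edge `a ← b` or `a ↔ b`, `a` is not an
anterior of `b`; (2) for each edge `a − b` there is no edge `a ← c`, `a ↔ c`,
`b ← c` or `b ↔ c`. -/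
def IsAG (G : MixedGraph V) : Prop :=
  (∀ a b, G.dir b a ∨ G.bi a b → ¬ G.Anterior a b) ∧
  (∀ a b, G.undir a b →
    ∀ c, ¬ G.dir c a ∧ ¬ G.bi a c ∧ ¬ G.dir c b ∧ ¬ G.bi b c)

/-- A DAG: only directed edges, and no directed cycles. -/
def IsDAG (G : MixedGraph V) : Prop :=
  (∀ u v, ¬ G.bi u v) ∧ (∀ u v, ¬ G.undir u v) ∧
  (∀ v, ¬ Relation.TransGen G.dir v v)

/-- Two nodes are adjacent if they are joined by some edge. -/
def Adjacent (G : MixedGraph V) (u v : V) : Prop :=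
  G.dir u v ∨ G.dir v u ∨ G.bi u v ∨ G.undir u v

/-- A maximal ancestral graph (MAG): only directed and bidirected edges, no
directed cycle, no almost-directed cycle, and every pair of non-adjacent
nodes can be m-separated by some set of the remaining nodes. -/
def IsMAG (G : MixedGraph V) : Prop :=
  (∀ u v, ¬ G.undir u v) ∧
  (∀ v, ¬ Relation.TransGen G.dir v v) ∧
  (∀ u v, G.bi u v → ¬ Relation.TransGen G.dir v u) ∧
  (∀ u v, u ≠ v → ¬ G.Adjacent u v →
    ∃ Z : Set V, u ∉ Z ∧ v ∉ Z ∧ ¬ G.MConn Z u v)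

/-- `PCP G X Y`: the set of nodes, excluding nodes of `X`, that lie on a
proper causal path from `X` to `Y`. -/
def PCP (G : MixedGraph V) (X Y : Set V) : Set V :=
  {w | w ∉ X ∧ ∃ x ∈ X, ∃ y ∈ Y, ∃ p : G.Walk x y,
    p.IsPath ∧ p.IsCausal ∧ p.ProperFrom X ∧ w ∈ p.support}

/-- `Dpcp G X Y`: the descendants of nodes on proper causal paths. -/
def Dpcp (G : MixedGraph V) (X Y : Set V) : Set V := G.De (G.PCP X Y)

/-- Remove from `G` all edges into `A` and all edges out of `B`. -/
def rmInOut (G : MixedGraph V) (A B : Set V) : MixedGraph V where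
  dir u v := G.dir u v ∧ v ∉ A ∧ u ∉ B
  bi u v := G.bi u v ∧ u ∉ A ∧ v ∉ A
  undir u v := G.undir u v ∧ u ∉ B ∧ v ∉ B
  bi_symm := fun u v h => ⟨G.bi_symm u v h.1, h.2.2, h.2.1⟩
  undir_symm := fun u v h => ⟨G.undir_symm u v h.1, h.2.2, h.2.1⟩

/-- The parametrized proper back-door graph: remove every edge `x → d` with
`x ∈ X` and `d ∈ PCP(X,Y) ∪ C`. -/
def pbdC (G : MixedGraph V) (X Y C : Set V) : MixedGraph V where
  dir u v := G.dir u v ∧ ¬(u ∈ X ∧ v ∈ G.PCP X Y ∪ C)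
  bi := G.bi
  undir := G.undir
  bi_symm := G.bi_symm
  undir_symm := G.undir_symm

/-- The proper back-door graph. -/
def pbd (G : MixedGraph V) (X Y : Set V) : MixedGraph V := G.pbdC X Y ∅

/-- The adjustment criterion (AC) in a DAG: (a) no element of `Z` is a
descendant in `G_{X̄}` of a node outside `X` lying on a proper causal path
from `X` to `Y`; (b) every proper non-causal path from `X` to `Y` is blocked
by `Z`. -/
def SatisfiesACdag (G : MixedGraph V) (X Y Z : Set V) : Prop :=
  (∀ z ∈ Z, z ∉ (G.rmInOut X ∅).De (G.PCP X Y)) ∧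
  (∀ x ∈ X, ∀ y ∈ Y, ∀ p : G.Walk x y,
    p.IsPath → p.ProperFrom X → ¬ p.IsCausal → ¬ p.ConnBy Z)

/-- The adjustment criterion (AC) in a MAG: (a) no element of `Z` is a
descendant in `M` of a node outside `X` lying on a proper causal path from
`X` to `Y`; (b) every proper non-causal path from `X` to `Y` is blocked by
`Z`. -/
def SatisfiesACmag (G : MixedGraph V) (X Y Z : Set V) : Prop :=
  (∀ z ∈ Z, z ∉ G.Dpcp X Y) ∧
  (∀ x ∈ X, ∀ y ∈ Y, ∀ p : G.Walk x y,
    p.IsPath → p.ProperFrom X → ¬ p.IsCausal → ¬ p.ConnBy Z)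

/-- The constructive back-door criterion (CBC): (a) `Z` avoids
`Dpcp(X,Y)`; (b) `Z` m-separates `X` and `Y` in the proper back-door
graph. -/
def SatisfiesCBC (G : MixedGraph V) (X Y Z : Set V) : Prop :=
  (∀ z ∈ Z, z ∉ G.Dpcp X Y) ∧ (G.pbd X Y).MSep X Y Z

/-- The parametrized constructive back-door criterion CBC(A,B,C). -/
def SatisfiesCBCP (G : MixedGraph V) (X Y Z A B C : Set V) : Prop :=
  (∀ z ∈ Z, z ∉ (G.rmInOut A B).De (G.PCP X Y)) ∧ (G.pbdC X Y C).MSep X Y Z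

namespace Walk

variable {G : MixedGraph V}

/-- Auxiliary check for inducing paths: every interior non-collider is in
`L`, and every interior collider is an ancestor of a node of `T`.  `ph`
records whether the previous edge has an arrowhead at the current node. -/
def indFrom (L T : Set V) : Prop → {a b : V} → G.Walk a b → Prop
  | _, _, _, .nil _ => True
  | ph, _, _, .cons u _ _ e _ p =>
      ((ph ∧ e.headFst) → ∃ t ∈ T, Relation.ReflTransGen G.dir u t) ∧
      (¬(ph ∧ e.headFst) → u ∈ L) ∧ p.indFrom L T e.headSnd

/-- Interior conditions for inducing paths (endpoints are exempt). -/
def indBody (L T : Set V) : {a b : V} → G.Walk a b → Prop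
  | _, _, .nil _ => True
  | _, _, .cons _ _ _ e _ p => p.indFrom L T e.headSnd

end Walk

/-- `p` is an inducing path with respect to `Z` and `L`: a path on which
every non-collider other than the endpoints is in `L` and every collider is
an ancestor of the endpoints or of `Z`. -/
def IsInducing (G : MixedGraph V) (Z L : Set V) {a b : V} (p : G.Walk a b) : Prop :=
  p.IsPath ∧ p.indBody L ({a, b} ∪ Z)

/-- Adjacency in the MAG `G[∅_L`: `u, v ∉ L` are adjacent iff they cannot be
d-separated in `G` by any set `W ⊆ V∖L` (not containing `u, v`). -/
def magAdj (G : MixedGraph V) (L : Set V) (u v : V) : Prop :=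
  u ∉ L ∧ v ∉ L ∧ u ≠ v ∧
  ∀ W : Set V, Disjoint W L → u ∉ W → v ∉ W → (G.MConn W u v ∧ G.MConn W v u)

/-- The MAG `G[∅_L` obtained from the DAG `G` by marginalizing `L`: adjacent
`u, v` are joined by `u → v` if `u` is an ancestor of `v` in `G` and `v` is
not an ancestor of `u`, and by `u ↔ v` if neither is an ancestor of the
other. -/
def mag (G : MixedGraph V) (L : Set V) : MixedGraph V where
  dir u v := G.magAdj L u v ∧ G.Anc u v ∧ ¬ G.Anc v u
  bi u v := G.magAdj L u v ∧ ¬ G.Anc u v ∧ ¬ G.Anc v u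
  undir _ _ := False
  bi_symm := fun u v h =>
    ⟨⟨h.1.2.1, h.1.1, h.1.2.2.1.symm,
      fun W hW hv hu => ⟨(h.1.2.2.2 W hW hu hv).2, (h.1.2.2.2 W hW hu hv).1⟩⟩,
      h.2.2, h.2.1⟩
  undir_symm := fun _ _ h => h.elim

/-- An inducing `Z`-trail in the MAG `G[∅_L`: a path whose interior nodes are
exactly the `Z`-nodes on it, each consecutive pair being linked in `G` by an
inducing path w.r.t. `∅, L` which has arrowheads at the interior nodes. -/
def IsInducingZTrail (G : MixedGraph V) (Z L : Set V) {a b : V}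
    (p : (G.mag L).Walk a b) : Prop :=
  p.IsPath ∧ a ∉ Z ∧ b ∉ Z ∧
  (∀ v ∈ p.support, v ≠ a → v ≠ b → v ∈ Z) ∧
  p.edgeProp (fun u v => ∃ q : G.Walk u v, G.IsInducing ∅ L q ∧
    (u ∈ Z → q.headAtStart) ∧ (v ∈ Z → q.headAtEnd))

end MixedGraph

open MixedGraph

variable {V : Type u}


namespace MixedGraph

variable {V : Type u} {G : MixedGraph V}

lemma mem_ant_of_antEdge {S : Set V} {u v : V} (h : G.antEdge u v)
    (hv : v ∈ G.Ant S) : u ∈ G.Ant S := by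
  obtain ⟨t, ht, hvt⟩ := hv
  exact ⟨t, ht, Relation.ReflTransGen.head h hvt⟩

lemma mem_ant_self {S : Set V} {u : V} (h : u ∈ S) : u ∈ G.Ant S :=
  ⟨u, h, Relation.ReflTransGen.refl⟩

lemma ant_union_absorb {S Z : Set V} (hZ : Z ⊆ G.Ant S) {u : V}
    (h : u ∈ G.Ant (S ∪ Z)) : u ∈ G.Ant S := by
  obtain ⟨t, ht, hut⟩ := h
  rcases ht with ht | ht
  · exact ⟨t, ht, hut⟩
  · obtain ⟨s, hs, hts⟩ := hZ ht
    exact ⟨s, hs, hut.trans hts⟩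

lemma arrow_anc (hAG : G.IsAG) {c t : V} (h : G.Anterior c t) :
    (∃ d, G.dir d c ∨ G.bi c d) → G.Anc c t := by
  induction h using Relation.ReflTransGen.head_induction_on with
  | refl => exact fun _ => Relation.ReflTransGen.refl
  | @head a m hstep htail ih =>
    rintro ⟨d, hd⟩
    rcases hstep with hdir | hund
    · exact Relation.ReflTransGen.head hdir (ih ⟨a, Or.inl hdir⟩)
    · rcases hd with h1 | h1
      · exact absurd h1 (hAG.2 a m hund d).1
      · exact absurd h1 (hAG.2 a m hund d).2.1

namespace Walk

/-- The walk is nil or its first edge has no arrowhead at the start. -/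
def noHeadStart : {a b : V} → G.Walk a b → Prop
  | _, _, .nil _ => True
  | _, _, .cons _ _ _ e _ _ => ¬ e.headFst

lemma connFrom_connBy {Z : Set V} {a b : V} {p : G.Walk a b} {ph : Prop}
    (h : p.connFrom Z ph) : p.ConnBy Z := by
  cases p with
  | nil v => trivial
  | cons u v w e he q =>
    simp only [Walk.connFrom] at h
    exact h.2

end Walk

/-- Following a walk forward from a node whose first edge has no arrowhead
at it: the node is an anterior of the far endpoint or of a collider in `Z`. -/
lemma fwd (hAG : G.IsAG) (Z T : Set V) {u b : V} (p : G.Walk u b) :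
    ∀ ph : Prop, p.connFrom Z ph → p.noHeadStart → b ∈ T → u ∈ G.Ant (T ∪ Z) := by
  induction p with
  | nil v => exact fun _ _ _ hb => mem_ant_self (Or.inl hb)
  | cons u v b e h q ih =>
    intro ph hc hn hb
    simp only [Walk.connFrom] at hc
    obtain ⟨_, hq⟩ := hc
    simp only [Walk.noHeadStart] at hn
    have hante : G.antEdge u v := by
      cases e with
      | right => exact Or.inl h
      | left => exact absurd trivial hn
      | both => exact absurd trivial hn
      | undirEdge => exact Or.inr h
    by_cases hvZ : v ∈ Z
    · exact ⟨v, Or.inr hvZ, Relation.ReflTransGen.single hante⟩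
    · have hnq : q.noHeadStart := by
        cases q with
        | nil => trivial
        | cons v w b e' h' q' =>
          simp only [Walk.connFrom] at hq
          have hcond := hq.1
          simp only [Walk.noHeadStart]
          intro hf
          by_cases hs : e.headSnd
          · exact hvZ (hcond.mp ⟨hs, hf⟩)
          · have hund : G.undir u v := by
              cases e with
              | right => exact absurd trivial hs
              | left => exact absurd trivial hn
              | both => exact absurd trivial hn
              | undirEdge => exact h
            cases e' with
            | right => exact hf
            | left => exact absurd h' (hAG.2 u v hund w).2.2.1
            | both => exact absurd h' (hAG.2 u v hund w).2.2.2
            | undirEdge => exact hf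
      exact mem_ant_of_antEdge hante (ih e.headSnd hq hnq hb)

/-- Every node of an m-connecting walk is an anterior of the far endpoint,
a backward-reachable set, or a collider in `Z`. -/
lemma allAnt (hAG : G.IsAG) (Z T : Set V) {u b : V} (p : G.Walk u b) :
    ∀ ph : Prop, p.connFrom Z ph → b ∈ T → (¬ph → u ∈ G.Ant (T ∪ Z)) →
      ∀ n ∈ p.support, n ∈ G.Ant (T ∪ Z) := by
  induction p with
  | nil v =>
    intro ph _ hb _ n hn
    simp only [Walk.support, List.mem_singleton] at hn
    subst hn
    exact mem_ant_self (Or.inl hb)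
  | cons u v b e h q ih =>
    intro ph hc hb hinv n hn
    simp only [Walk.connFrom] at hc
    obtain ⟨hcond, hq⟩ := hc
    have hu : u ∈ G.Ant (T ∪ Z) := by
      by_cases hph : ph
      · by_cases hf : e.headFst
        · exact mem_ant_self (Or.inr (hcond.mp ⟨hph, hf⟩))
        · refine fwd hAG Z T (.cons u v b e h q) ph ?_ hf hb
          simp only [Walk.connFrom]
          exact ⟨hcond, hq⟩
      · exact hinv hph
    have hinv' : ¬ e.headSnd → v ∈ G.Ant (T ∪ Z) := by
      intro hs
      refine mem_ant_of_antEdge ?_ hu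
      cases e with
      | right => exact absurd trivial hs
      | left => exact Or.inl h
      | both => exact absurd trivial hs
      | undirEdge => exact Or.inr (G.undir_symm u v h)
    simp only [Walk.support, List.mem_cons] at hn
    rcases hn with rfl | hn
    · exact hu
    · exact ih e.headSnd hq hb hinv' n hn

lemma split (Z₀ XY I : Set V) (hI : I ⊆ Z₀) {u t : V}
    (h : Relation.ReflTransGen G.dir u t) (ht : t ∈ XY ∪ I) :
    u ∉ Z₀ →
      ((∃ z ∈ Z₀, Relation.ReflTransGen (fun a b => G.dir a b ∧ a ∉ Z₀) u z) ∨
       (∃ t' ∈ XY, Relation.ReflTransGen (fun a b => G.dir a b ∧ b ∉ Z₀) u t')) := by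
  induction h using Relation.ReflTransGen.head_induction_on with
  | refl =>
    intro hu
    rcases ht with ht | ht
    · exact Or.inr ⟨t, ht, Relation.ReflTransGen.refl⟩
    · exact absurd (hI ht) hu
  | @head a m hstep htail ih =>
    intro hu
    by_cases hm : m ∈ Z₀
    · exact Or.inl ⟨m, hm, Relation.ReflTransGen.single ⟨hstep, hu⟩⟩
    · rcases ih hm with ⟨z, hz, hp⟩ | ⟨t', ht', hp⟩
      · exact Or.inl ⟨z, hz, Relation.ReflTransGen.head ⟨hstep, hu⟩ hp⟩
      · exact Or.inr ⟨t', ht', Relation.ReflTransGen.head ⟨hstep, hm⟩ hp⟩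

lemma detour (Z₀ : Set V) {z u : V} (hz : z ∈ Z₀)
    (hd : Relation.ReflTransGen (fun a b => G.dir a b ∧ a ∉ Z₀) u z) :
    u ∉ Z₀ → ∀ {y' : V} (w₀ : G.Walk u y'), w₀.connFrom Z₀ False →
      ∃ w : G.Walk u y', ∀ ph : Prop, w.connFrom Z₀ ph := by
  induction hd using Relation.ReflTransGen.head_induction_on with
  | refl => exact fun hu => absurd hz hu
  | @head a m hstep htail ih =>
    intro hu y' w₀ hw₀
    by_cases hm : m ∈ Z₀
    · refine ⟨.cons a m y' .right hstep.1 (.cons m a y' .left hstep.1 w₀), fun ph => ?_⟩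
      simp only [Walk.connFrom, EType.headFst, EType.headSnd]
      exact ⟨⟨fun h => h.2.elim, fun h => absurd h hu⟩,
        ⟨fun _ => hm, fun _ => ⟨trivial, trivial⟩⟩, hw₀⟩
    · have hrest : (Walk.cons m a y' .left hstep.1 w₀).connFrom Z₀ False := by
        simp only [Walk.connFrom, EType.headFst, EType.headSnd]
        exact ⟨⟨fun h => h.1.elim, fun h => absurd h hm⟩, hw₀⟩
      obtain ⟨w₁, hw₁⟩ := ih hm _ hrest
      refine ⟨.cons a m y' .right hstep.1 w₁, fun ph => ?_⟩
      simp only [Walk.connFrom, EType.headFst, EType.headSnd]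
      exact ⟨⟨fun h => h.2.elim, fun h => absurd h hu⟩, hw₁ True⟩

lemma truncY (Z₀ : Set V) {u t : V}
    (hd : Relation.ReflTransGen (fun a b => G.dir a b ∧ b ∉ Z₀) u t) :
    u ∉ Z₀ → ∃ w : G.Walk u t, ∀ ph : Prop, w.connFrom Z₀ ph := by
  induction hd using Relation.ReflTransGen.head_induction_on with
  | refl => exact fun _ => ⟨.nil t, fun _ => trivial⟩
  | @head a m hstep htail ih =>
    intro ha
    obtain ⟨w₁, hw₁⟩ := ih hstep.2
    refine ⟨.cons a m t .right hstep.1 w₁, fun ph => ?_⟩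
    simp only [Walk.connFrom, EType.headFst, EType.headSnd]
    exact ⟨⟨fun h => h.2.elim, fun h => absurd h ha⟩, hw₁ True⟩

lemma truncX (Z₀ : Set V) {u t : V}
    (hd : Relation.ReflTransGen (fun a b => G.dir a b ∧ b ∉ Z₀) u t) :
    ∀ {y' : V} (w₀ : G.Walk u y'), w₀.connFrom Z₀ False →
      ∃ w : G.Walk t y', w.ConnBy Z₀ := by
  induction hd using Relation.ReflTransGen.head_induction_on with
  | refl => exact fun w₀ h => ⟨w₀, Walk.connFrom_connBy h⟩
  | @head a m hstep htail ih =>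
    intro y' w₀ hw₀
    refine ih (Walk.cons m a y' .left hstep.1 w₀) ?_
    simp only [Walk.connFrom, EType.headFst, EType.headSnd]
    exact ⟨⟨fun h => h.1.elim, fun h => absurd h hstep.2⟩, hw₀⟩

lemma key (hAG : G.IsAG) (X Y I R Z₀ : Set V)
    (hZ₀ : G.IsMSep X Y Z₀) (hIZ₀ : I ⊆ Z₀) (hZ₀R : Z₀ ⊆ R)
    (hR : R ∩ (X ∪ Y) = ∅) {u y : V} (w : G.Walk u y) :
    ∀ ph : Prop, w.connFrom (G.Ant (X ∪ Y ∪ I) ∩ R) ph →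
      (∀ n ∈ w.support, n ∈ G.Ant (X ∪ Y ∪ I)) → y ∈ Y →
      ∃ y' ∈ Y, ∃ w' : G.Walk u y', w'.connFrom Z₀ ph := by
  induction w with
  | nil v => exact fun ph _ _ hy => ⟨v, hy, .nil v, trivial⟩
  | cons u v yy e h q ih =>
    intro ph hc hant hy
    simp only [Walk.connFrom] at hc
    obtain ⟨hcond, hq⟩ := hc
    have hant' : ∀ n ∈ q.support, n ∈ G.Ant (X ∪ Y ∪ I) := fun n hn =>
      hant n (by simp only [Walk.support, List.mem_cons]; exact Or.inr hn)
    obtain ⟨y', hy', q', hq'⟩ := ih e.headSnd hq hant' hy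
    have huA : u ∈ G.Ant (X ∪ Y ∪ I) := hant u (by
      simp only [Walk.support, List.mem_cons]; exact Or.inl trivial)
    by_cases hcol : ph ∧ e.headFst
    · have huZ := hcond.mp hcol
      by_cases hu0 : u ∈ Z₀
      · refine ⟨y', hy', .cons u v y' e h q', ?_⟩
        simp only [Walk.connFrom]
        exact ⟨⟨fun _ => hu0, fun _ => hcol⟩, hq'⟩
      · -- bad collider
        have hw₀ : (Walk.cons u v y' e h q').connFrom Z₀ False := by
          simp only [Walk.connFrom]
          exact ⟨⟨fun hh => hh.1.elim, fun hh => absurd hh hu0⟩, hq'⟩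
        have hhead : ∃ d, G.dir d u ∨ G.bi u d := by
          cases e with
          | right => exact hcol.2.elim
          | left => exact ⟨v, Or.inl h⟩
          | both => exact ⟨v, Or.inr h⟩
          | undirEdge => exact hcol.2.elim
        obtain ⟨t, htS, hut⟩ := huA
        have hanc : G.Anc u t := arrow_anc hAG hut hhead
        rcases split Z₀ (X ∪ Y) I hIZ₀ hanc htS hu0 with
          ⟨z, hz0, hdz⟩ | ⟨t', ht', hnt⟩
        · obtain ⟨w'', hw''⟩ := detour Z₀ hz0 hdz hu0 _ hw₀
          exact ⟨y', hy', w'', hw'' ph⟩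
        · rcases ht' with htX | htY
          · obtain ⟨wfin, hwfin⟩ := truncX Z₀ hnt _ hw₀
            exact absurd ⟨wfin, hwfin⟩ (hZ₀.2 t' htX y' hy')
          · obtain ⟨w'', hw''⟩ := truncY Z₀ hnt hu0
            exact ⟨t', htY, w'', hw'' ph⟩
    · have huZ : u ∉ (G.Ant (X ∪ Y ∪ I) ∩ R) := fun hz => hcol (hcond.mpr hz)
      have hu0 : u ∉ Z₀ := fun h0 => huZ ⟨huA, hZ₀R h0⟩
      refine ⟨y', hy', .cons u v y' e h q', ?_⟩
      simp only [Walk.connFrom]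
      exact ⟨⟨fun hcc => absurd hcc hcol, fun h0 => absurd h0 hu0⟩, hq'⟩

end MixedGraph

theorem statement_0 (G : MixedGraph V) (hAG : G.IsAG)
    (X Y I R : Set V) (hXY : Disjoint X Y) (hX : X.Nonempty) (hY : Y.Nonempty)
    (hIR : I ⊆ R) (hR : R ∩ (X ∪ Y) = ∅)
    (Z₀ : Set V) (hZ₀ : G.IsMSep X Y Z₀) (hIZ₀ : I ⊆ Z₀) (hZ₀R : Z₀ ⊆ R) :
    G.IsMSep X Y (G.Ant (X ∪ Y ∪ I) ∩ R) := by
  constructor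
  · rw [Set.disjoint_left]
    rintro a ⟨_, haR⟩ haXY
    have : a ∈ R ∩ (X ∪ Y) := ⟨haR, haXY⟩
    rw [hR] at this
    exact this
  · rintro x hx y hy ⟨w, hw⟩
    cases w with
    | nil v => exact Set.disjoint_left.mp hXY hx hy
    | cons x v yy e h q =>
      simp only [Walk.ConnBy] at hw
      have hinv : ¬ e.headSnd → v ∈ G.Ant ((X ∪ Y ∪ I) ∪ (G.Ant (X ∪ Y ∪ I) ∩ R)) := by
        intro hs
        refine mem_ant_of_antEdge ?_ (mem_ant_self (Or.inl (Or.inl (Or.inl hx))))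
        cases e with
        | right => exact absurd trivial hs
        | left => exact Or.inl h
        | both => exact absurd trivial hs
        | undirEdge => exact Or.inr (G.undir_symm x v h)
      have hant0 := allAnt hAG (G.Ant (X ∪ Y ∪ I) ∩ R) (X ∪ Y ∪ I) q e.headSnd hw
        (Or.inl (Or.inr hy)) hinv
      have hant : ∀ n ∈ q.support, n ∈ G.Ant (X ∪ Y ∪ I) := fun n hn =>
        ant_union_absorb (fun a ha => ha.1) (hant0 n hn)
      obtain ⟨y', hy', q', hq'⟩ := key hAG X Y I R Z₀ hZ₀ hIZ₀ hZ₀R hR q e.headSnd hw hant hy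
      exact hZ₀.2 x hx y' hy' ⟨.cons x v y' e h q', Walk.connFrom_connBy
        (show (Walk.cons x v y' e h q').connFrom Z₀ False from by
          simp only [Walk.connFrom]
          exact ⟨⟨fun hh => hh.1.elim, fun hh => absurd (Or.inl hx : x ∈ X ∪ Y) (Set.disjoint_left.mp hZ₀.1 hh)⟩, hq'⟩)⟩
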